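/- The acceptance time k_n satisfies lim_{n→∞} k_n/n = 1 + (1/p)·log(1/(1+b·p)), and this limit lies in (0,1); in particular k_n ~ n·(1 + (1/p)·log(1/(1+b·p))) as n → ∞. -/

import Mathlib

/-- Auxiliary sequence for the thresholds `φ^{(n)}_k`, counted backwards from time `n`:
`phiAux b p n m = φ^{(n)}_{n-m}`. -/
noncomputable def phiAux (b p : ℝ) (n : ℕ) : ℕ → ℝ
  | 0 => (1 + b * p) / n
  | m + 1 =>
      (1 / (n : ℝ) ^ 2) * max (n : ℝ) (phiAux b p n m)
        + (p / n) * max b (phiAux b p n m)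
        + (1 - p / n - 1 / (n : ℝ) ^ 2) * max 0 (phiAux b p n m)

/-- The threshold `φ^{(n)}_k`: the expected future reward of the optimal rule at time `k`
given that the value `a` has already been probed.  Defined by `φ^{(n)}_n = (1+b·p)/n` and,
for `1 ≤ k < n`,
`φ^{(n)}_k = (1/n²)·max(n, φ^{(n)}_{k+1}) + (p/n)·max(b, φ^{(n)}_{k+1})
  + (1 − p/n − 1/n²)·max(0, φ^{(n)}_{k+1})`. -/
noncomputable def phi (b p : ℝ) (n k : ℕ) : ℝ := phiAux b p n (n - k)

/-- Auxiliary sequence for the thresholds `φ̄^{(n)}_k`, counted backwards from time `n`: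
`phibarAux a b p n m = φ̄^{(n)}_{n-m}`. -/
noncomputable def phibarAux (a b p : ℝ) (n : ℕ) : ℕ → ℝ
  | 0 => a
  | m + 1 =>
      max a (phiAux b p n m) / ((m : ℝ) + 2)
        + (1 - 1 / ((m : ℝ) + 2)) *
            ((1 / (n : ℝ) ^ 2) * max (n : ℝ) (phibarAux a b p n m)
              + (p / n) * max b (phibarAux a b p n m)
              + (1 - p / n - 1 / (n : ℝ) ^ 2) * max 0 (phibarAux a b p n m))

/-- The threshold `φ̄^{(n)}_k`: the expected future reward of the optimal rule at time `k`
given that the value `a` has not been probed yet.  Defined by `φ̄^{(n)}_n = a` and, for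
`1 ≤ k < n`,
`φ̄^{(n)}_k = max(a, φ^{(n)}_{k+1})/(n+1−k) + (1 − 1/(n+1−k))·[(1/n²)·max(n, φ̄^{(n)}_{k+1})
  + (p/n)·max(b, φ̄^{(n)}_{k+1}) + (1 − p/n − 1/n²)·max(0, φ̄^{(n)}_{k+1})]`. -/
noncomputable def phibar (a b p : ℝ) (n k : ℕ) : ℝ := phibarAux a b p n (n - k)

/-- `j_n`: the earliest time `k ∈ {1,…,n}` with `a ≥ φ^{(n)}_k`. -/
noncomputable def jn (a b p : ℝ) (n : ℕ) : ℕ :=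
  sInf {k : ℕ | 1 ≤ k ∧ k ≤ n ∧ phi b p n k ≤ a}

/-- `k_n`: the earliest time `k ∈ {1,…,n}` with `b ≥ φ^{(n)}_k`. -/
noncomputable def kn (b p : ℝ) (n : ℕ) : ℕ :=
  sInf {k : ℕ | 1 ≤ k ∧ k ≤ n ∧ phi b p n k ≤ b}

/-- `k̄_n`: the earliest time `k ∈ {1,…,n}` with `b ≥ φ̄^{(n)}_k`. -/
noncomputable def kbarn (a b p : ℝ) (n : ℕ) : ℕ :=
  sInf {k : ℕ | 1 ≤ k ∧ k ≤ n ∧ phibar a b p n k ≤ b}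

open Filter Real Topology


lemma phiAux_succ_def (b p : ℝ) (n m : ℕ) :
    phiAux b p n (m+1) =
      (1 / (n : ℝ) ^ 2) * max (n : ℝ) (phiAux b p n m)
        + (p / n) * max b (phiAux b p n m)
        + (1 - p / n - 1 / (n : ℝ) ^ 2) * max 0 (phiAux b p n m) := rfl

lemma phiAux_zero_def (b p : ℝ) (n : ℕ) : phiAux b p n 0 = (1 + b*p)/n := rfl

lemma phiAux_mono {b p : ℝ} (hp : 0 ≤ p) {n : ℕ}
    (hq : p / n + 1 / (n:ℝ)^2 ≤ 1) : Monotone (phiAux b p n) := by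
  apply monotone_nat_of_le_succ
  intro m
  rw [phiAux_succ_def]
  set x := phiAux b p n m with hx
  have h1 : x ≤ max (n:ℝ) x := le_max_right _ _
  have h2 : x ≤ max b x := le_max_right _ _
  have h3 : x ≤ max 0 x := le_max_right _ _
  have c1 : (0:ℝ) ≤ 1/(n:ℝ)^2 := by positivity
  have c2 : (0:ℝ) ≤ p/(n:ℝ) := by positivity
  have c3 : (0:ℝ) ≤ 1 - p/n - 1/(n:ℝ)^2 := by linarith
  nlinarith [mul_le_mul_of_nonneg_left h1 c1, mul_le_mul_of_nonneg_left h2 c2,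
    mul_le_mul_of_nonneg_left h3 c3]

noncomputable def psiS (b p : ℝ) (n : ℕ) : ℝ := (1 + p*b) * n / (p*n + 1)

lemma key_identity {b p : ℝ} (hp : 0 < p) {n : ℕ} (hn : 0 < n) :
    (1+p*b)/n + (1 - p/n - 1/(n:ℝ)^2) * psiS b p n = psiS b p n := by
  have hn0 : (0:ℝ) < n := by exact_mod_cast hn
  have hpn : p*(n:ℝ)+1 ≠ 0 := by positivity
  rw [psiS]
  field_simp
  ring

lemma phiAux_step {b p : ℝ} (hp : 0 < p) {n : ℕ}
    (hn : 0 < n) (hbn : b ≤ n) {x : ℝ} (hx0 : 0 ≤ x) (hxb : x ≤ b) :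
    (1 / (n : ℝ) ^ 2) * max (n : ℝ) x + (p / n) * max b x
        + (1 - p / n - 1 / (n : ℝ) ^ 2) * max 0 x
      = (1+p*b)/n + (1 - p/n - 1/(n:ℝ)^2) * x := by
  rw [max_eq_left (hxb.trans hbn), max_eq_left hxb, max_eq_right hx0]
  have hn0 : (0:ℝ) < n := by exact_mod_cast hn
  field_simp

lemma phiAux_formula {b p : ℝ} (hb : 0 < b) (hp : 0 < p) {n : ℕ}
    (hn : 0 < n) (hbn : b ≤ n) (hq : p/n + 1/(n:ℝ)^2 ≤ 1) :
    ∀ m, phiAux b p n m ≤ b →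
      phiAux b p n (m+1)
        = psiS b p n - (psiS b p n - (1+b*p)/n) * (1 - p/n - 1/(n:ℝ)^2)^(m+1) := by
  have hn0 : (0:ℝ) < n := by exact_mod_cast hn
  have h0 : (0:ℝ) ≤ phiAux b p n 0 := by
    rw [phiAux_zero_def]; positivity
  have hmono := phiAux_mono hp.le hq (b := b)
  intro m
  induction m with
  | zero =>
    intro hle
    rw [phiAux_succ_def, phiAux_step hp hn hbn h0 hle, phiAux_zero_def]
    linear_combination key_identity hp hn (b := b)
  | succ m ih =>
    intro hle
    have hm1 : phiAux b p n m ≤ b := le_trans (hmono (Nat.le_succ m)) hle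
    have hform := ih hm1
    have h0' : (0:ℝ) ≤ phiAux b p n (m+1) := h0.trans (hmono (Nat.zero_le _))
    rw [phiAux_succ_def, phiAux_step hp hn hbn h0' hle, hform]
    linear_combination key_identity hp hn (b := b)

lemma phiAux_formula' {b p : ℝ} (hb : 0 < b) (hp : 0 < p) {n : ℕ}
    (hn : 0 < n) (hbn : b ≤ n) (hq : p/n + 1/(n:ℝ)^2 ≤ 1) :
    ∀ m, phiAux b p n m ≤ b →
      phiAux b p n m
        = psiS b p n - (psiS b p n - (1+b*p)/n) * (1 - p/n - 1/(n:ℝ)^2)^m := by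
  intro m
  match m with
  | 0 => intro _; rw [phiAux_zero_def]; ring
  | m+1 =>
    intro hle
    have hmono := phiAux_mono hp.le hq (b := b)
    exact phiAux_formula hb hp hn hbn hq m (le_trans (hmono (Nat.le_succ m)) hle)

section
variable {b p : ℝ}

lemma tendsto_pn : Tendsto (fun n : ℕ => p/(n:ℝ)) atTop (𝓝 0) := by
  simpa [div_eq_mul_inv] using tendsto_one_div_atTop_nhds_zero_nat.const_mul p

lemma tendsto_invsq : Tendsto (fun n : ℕ => 1/(n:ℝ)^2) atTop (𝓝 0) := by
  have := (tendsto_one_div_atTop_nhds_zero_nat : Tendsto (fun n : ℕ => 1/(n:ℝ)) atTop (𝓝 0)).mul tendsto_one_div_atTop_nhds_zero_nat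
  simpa using this.congr (fun n => by ring)

lemma tendsto_q : Tendsto (fun n : ℕ => p/(n:ℝ) + 1/(n:ℝ)^2) atTop (𝓝 0) := by
  simpa using tendsto_pn.add tendsto_invsq

lemma tendsto_r : Tendsto (fun n : ℕ => 1 - p/(n:ℝ) - 1/(n:ℝ)^2) atTop (𝓝 1) := by
  have h : Tendsto (fun n : ℕ => 1 - (p/(n:ℝ) + 1/(n:ℝ)^2)) atTop (𝓝 (1 - 0)) :=
    tendsto_const_nhds.sub tendsto_q
  simpa [sub_sub] using h

lemma tendsto_psiS (hp : 0 < p) : Tendsto (psiS b p) atTop (𝓝 ((1+p*b) * p⁻¹)) := by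
  have h1 : Tendsto (fun n : ℕ => p + 1/(n:ℝ)) atTop (𝓝 p) := by
    simpa using (tendsto_const_nhds : Tendsto (fun _ : ℕ => p) atTop (𝓝 p)).add
      tendsto_one_div_atTop_nhds_zero_nat
  have h2 : Tendsto (fun n : ℕ => (1+p*b) * (p + 1/(n:ℝ))⁻¹) atTop (𝓝 ((1+p*b) * p⁻¹)) :=
    (h1.inv₀ hp.ne').const_mul _
  apply h2.congr' _
  filter_upwards [eventually_ge_atTop 1] with n hn
  have hn0 : (0:ℝ) < n := by exact_mod_cast hn
  have hpn : p*(n:ℝ)+1 ≠ 0 := by positivity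
  have hpp : p + 1/(n:ℝ) ≠ 0 := by positivity
  rw [psiS]
  field_simp

lemma tendsto_A (hb : 0 < b) (hp : 0 < p) :
    Tendsto (fun n : ℕ => psiS b p n - (1+b*p)/n) atTop (𝓝 ((1+p*b) * p⁻¹)) := by
  have h1 : Tendsto (fun n : ℕ => (1+b*p)/(n:ℝ)) atTop (𝓝 0) := by
    simpa [div_eq_mul_inv] using tendsto_one_div_atTop_nhds_zero_nat.const_mul (1+b*p)
  simpa using (tendsto_psiS hp).sub h1

lemma tendsto_D (hp : 0 < p) :
    Tendsto (fun n : ℕ => (n:ℝ) * Real.log (1 - p/(n:ℝ) - 1/(n:ℝ)^2)) atTop (𝓝 (-p)) := by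
  have hder : HasDerivAt Real.log 1 1 := by simpa using Real.hasDerivAt_log one_ne_zero
  have hslope : Tendsto (slope Real.log 1) (𝓝[≠] (1:ℝ)) (𝓝 1) :=
    hasDerivAt_iff_tendsto_slope.mp hder
  have hrto : Tendsto (fun n : ℕ => 1 - p/(n:ℝ) - 1/(n:ℝ)^2) atTop (𝓝[≠] (1:ℝ)) := by
    rw [tendsto_nhdsWithin_iff]
    refine ⟨tendsto_r, ?_⟩
    filter_upwards [eventually_ge_atTop 1] with n hn
    have hn0 : (0:ℝ) < n := by exact_mod_cast hn
    have : 0 < p/(n:ℝ) + 1/(n:ℝ)^2 := by positivity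
    simp only [Set.mem_compl_iff, Set.mem_singleton_iff]
    intro h
    nlinarith
  have hcomp : Tendsto (fun n : ℕ =>
      slope Real.log 1 (1 - p/(n:ℝ) - 1/(n:ℝ)^2)) atTop (𝓝 1) := hslope.comp hrto
  have hnr : Tendsto (fun n : ℕ => (n:ℝ) * ((1 - p/(n:ℝ) - 1/(n:ℝ)^2) - 1)) atTop (𝓝 (-p)) := by
    have h1 : Tendsto (fun n : ℕ => -p - 1/(n:ℝ)) atTop (𝓝 (-p)) := by
      simpa using (tendsto_const_nhds : Tendsto (fun _ : ℕ => -p) atTop (𝓝 (-p))).sub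
        tendsto_one_div_atTop_nhds_zero_nat
    apply h1.congr'
    filter_upwards [eventually_ge_atTop 1] with n hn
    have hn0 : (0:ℝ) < n := by exact_mod_cast hn
    field_simp
    ring
  have := hcomp.mul hnr
  rw [one_mul] at this
  apply this.congr'
  filter_upwards [eventually_ge_atTop 1] with n hn
  have hn0 : (0:ℝ) < n := by exact_mod_cast hn
  have hne : (1 - p/(n:ℝ) - 1/(n:ℝ)^2) - 1 ≠ 0 := by
    have : 0 < p/(n:ℝ) + 1/(n:ℝ)^2 := by positivity
    intro h; nlinarith
  have key : ∀ x y c : ℝ, y ≠ 0 → x / y * (c * y) = c * x := by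
    intros x y c hy; field_simp
  rw [slope_def_field, Real.log_one, sub_zero, key _ _ _ hne]

end


/-- `k_n/n → 1 + (1/p)·log(1/(1+b·p))` as `n → ∞`, and this limit lies in
`(0,1)`; in particular `k_n ∼ n·(1 + (1/p)·log(1/(1+b·p)))`. -/
theorem stmt_4 (a b p : ℝ)
    (ha : 0 < a) (ha1 : a < 1) (hb : 1 < b) (hp : 0 < p)
    (hlog : Real.log (1 + p * b) < p)
    (hI : (1 + b * p) / (1 + (b - a) * p) * Real.log ((1 + b * p) / (1 + (b - a) * p)) ≤ a * p)
    (hII : (2 - p) * (b - a) < 1)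
    (hIII : (1 - (2 - p) * (b - a)) / (1 + p * (b - a))
        < 1 + (1 / p) * Real.log ((1 + p * (b - a)) / (1 + p * b)))
    (hIV : 0 ≤ 2 + p * b * (1 - p * (b - a)))
    (hV : b * p * (1 + (b - a) * p) / ((1 + p * b) * Real.log (1 + p * b)) < 1)
    :
    Filter.Tendsto (fun n : ℕ => (kn b p n : ℝ) / n) Filter.atTop
        (nhds (1 + (1 / p) * Real.log (1 / (1 + b * p))))
      ∧ 0 < 1 + (1 / p) * Real.log (1 / (1 + b * p))
      ∧ 1 + (1 / p) * Real.log (1 / (1 + b * p)) < 1 := by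
  have hb0 : (0:ℝ) < b := by linarith
  have hbp : 0 < p*b := by positivity
  have h1pb : (1:ℝ) < 1 + p*b := by linarith
  have hlogpos : 0 < Real.log (1+p*b) := Real.log_pos h1pb
  have h2 : Real.log (1/(1+b*p)) = -Real.log (1+p*b) := by
    rw [mul_comm b p, one_div, Real.log_inv]
  have heq : 1 + (1/p) * Real.log (1/(1+b*p)) = 1 - Real.log (1+p*b)/p := by
    rw [h2]; ring
  refine ⟨?_, ?_, ?_⟩
  · rw [heq]
    -- limits of N and D
    have hpinv : (0:ℝ) < (1+p*b) * p⁻¹ := by positivity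
    have hlimA := tendsto_A (b := b) (p := p) hb0 hp
    have hlimpsib : Tendsto (fun n : ℕ => psiS b p n - b) atTop (𝓝 ((1+p*b)*p⁻¹ - b)) :=
      (tendsto_psiS hp).sub tendsto_const_nhds
    have hpb_eq : (1+p*b)*p⁻¹ - b = p⁻¹ := by field_simp; ring
    have hpsibpos : (0:ℝ) < (1+p*b)*p⁻¹ - b := by rw [hpb_eq]; positivity
    have hlogN : Tendsto (fun n : ℕ =>
        Real.log (psiS b p n - b) - Real.log (psiS b p n - (1+b*p)/n)) atTop
        (𝓝 (-(Real.log (1+p*b)))) := by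
      have l1 := hlimpsib.log (ne_of_gt hpsibpos)
      have l2 := hlimA.log (ne_of_gt hpinv)
      have h := l1.sub l2
      have hval : Real.log ((1+p*b)*p⁻¹ - b) - Real.log ((1+p*b)*p⁻¹)
          = -(Real.log (1+p*b)) := by
        rw [hpb_eq, Real.log_mul (by positivity) (inv_ne_zero hp.ne'), Real.log_inv]
        ring
      rwa [hval] at h
    have hlogD := tendsto_D (p := p) hp
    have hT : Tendsto (fun n : ℕ =>
        (Real.log (psiS b p n - b) - Real.log (psiS b p n - (1+b*p)/n))
          / ((n:ℝ) * Real.log (1 - p/(n:ℝ) - 1/(n:ℝ)^2))) atTop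
        (𝓝 (Real.log (1+p*b)/p)) := by
      have h := hlogN.div hlogD (by simpa using hp.ne')
      simpa [neg_div_neg_eq, Pi.div_def] using h
    have hG : Tendsto (fun n : ℕ =>
        1 - (Real.log (psiS b p n - b) - Real.log (psiS b p n - (1+b*p)/n))
          / ((n:ℝ) * Real.log (1 - p/(n:ℝ) - 1/(n:ℝ)^2))) atTop
        (𝓝 (1 - Real.log (1+p*b)/p)) := tendsto_const_nhds.sub hT
    have hG1 : Tendsto (fun n : ℕ =>
        1 - (Real.log (psiS b p n - b) - Real.log (psiS b p n - (1+b*p)/n))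
          / ((n:ℝ) * Real.log (1 - p/(n:ℝ) - 1/(n:ℝ)^2)) + 1/(n:ℝ)) atTop
        (𝓝 (1 - Real.log (1+p*b)/p)) := by
      simpa using hG.add (tendsto_one_div_atTop_nhds_zero_nat)
    -- crossing comparison
    have hexp_lt : Real.exp (-p) < ((1+p*b)*p⁻¹ - b) / ((1+p*b)*p⁻¹) := by
      have he : ((1+p*b)*p⁻¹ - b) / ((1+p*b)*p⁻¹) = (1+p*b)⁻¹ := by
        rw [hpb_eq]; field_simp
      rw [he, Real.exp_neg]
      exact inv_strictAnti₀ (by linarith) ((Real.log_lt_iff_lt_exp (by linarith)).mp hlog)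
    have hfexp : Tendsto (fun n : ℕ => Real.exp (((n-1 : ℕ):ℝ) * (-(p/(n:ℝ)))))
        atTop (𝓝 (Real.exp (-p))) := by
      apply (Real.continuous_exp.continuousAt (x := -p)).tendsto.comp
      have h1 : Tendsto (fun n : ℕ => -p + p/(n:ℝ)) atTop (𝓝 (-p)) := by
        simpa using (tendsto_const_nhds : Tendsto (fun _ : ℕ => -p) atTop (𝓝 (-p))).add
          (tendsto_pn (p := p))
      apply h1.congr'
      filter_upwards [eventually_ge_atTop 1] with n hn
      have hn0 : (0:ℝ) < n := by exact_mod_cast hn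
      have hcast : ((n-1:ℕ):ℝ) = (n:ℝ) - 1 := by
        rw [Nat.cast_sub hn]; norm_num
      rw [hcast]
      field_simp
      ring
    have hgq : Tendsto (fun n : ℕ => (psiS b p n - b)/(psiS b p n - (1+b*p)/n)) atTop
        (𝓝 (((1+p*b)*p⁻¹ - b)/((1+p*b)*p⁻¹))) := hlimpsib.div hlimA (ne_of_gt hpinv)
    have hE8 : ∀ᶠ n : ℕ in atTop,
        (1 - p/(n:ℝ) - 1/(n:ℝ)^2)^(n-1) < (psiS b p n - b)/(psiS b p n - (1+b*p)/n) := by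
      filter_upwards [hfexp.eventually_lt hgq hexp_lt, eventually_ge_atTop 1,
        (tendsto_q (p := p)).eventually_lt_const zero_lt_one] with n h1 h2 h3
      refine lt_of_le_of_lt ?_ h1
      have hn0 : (0:ℝ) < n := by exact_mod_cast h2
      have hr0 : (0:ℝ) ≤ 1 - p/(n:ℝ) - 1/(n:ℝ)^2 := by linarith
      have hrle : 1 - p/(n:ℝ) - 1/(n:ℝ)^2 ≤ Real.exp (-(p/(n:ℝ))) := by
        have h4 := Real.add_one_le_exp (-(p/(n:ℝ)))
        have h5 : (0:ℝ) ≤ 1/(n:ℝ)^2 := by positivity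
        linarith
      calc (1 - p/(n:ℝ) - 1/(n:ℝ)^2)^(n-1)
          ≤ (Real.exp (-(p/(n:ℝ))))^(n-1) := pow_le_pow_left₀ hr0 hrle _
        _ = Real.exp (((n-1:ℕ):ℝ) * (-(p/(n:ℝ)))) := (Real.exp_nat_mul _ _).symm
    -- eventual bounds on kn/n
    have hbnd : ∀ᶠ n : ℕ in atTop,
        (1 - (Real.log (psiS b p n - b) - Real.log (psiS b p n - (1+b*p)/n))
          / ((n:ℝ) * Real.log (1 - p/(n:ℝ) - 1/(n:ℝ)^2))) ≤ (kn b p n : ℝ)/n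
        ∧ (kn b p n : ℝ)/n ≤
          (1 - (Real.log (psiS b p n - b) - Real.log (psiS b p n - (1+b*p)/n))
          / ((n:ℝ) * Real.log (1 - p/(n:ℝ) - 1/(n:ℝ)^2))) + 1/(n:ℝ) := by
      have hphi0ev : ∀ᶠ n : ℕ in atTop, (1+b*p)/(n:ℝ) < b := by
        have h1 : Tendsto (fun n : ℕ => (1+b*p)/(n:ℝ)) atTop (𝓝 0) := by
          simpa [div_eq_mul_inv] using tendsto_one_div_atTop_nhds_zero_nat.const_mul (1+b*p)
        exact h1.eventually_lt_const hb0
      filter_upwards [eventually_ge_atTop 1,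
        (tendsto_natCast_atTop_atTop (R := ℝ)).eventually_ge_atTop b,
        (tendsto_q (p := p)).eventually_lt_const zero_lt_one,
        hphi0ev,
        hlimA.eventually_const_lt hpinv,
        hlimpsib.eventually_const_lt hpsibpos,
        hE8] with n hn1 hbn hq1 hphi0 hA hpsib hcr
      have hn0 : 0 < n := hn1
      have hn0R : (0:ℝ) < n := by exact_mod_cast hn1
      have hqle : p/(n:ℝ) + 1/(n:ℝ)^2 ≤ 1 := hq1.le
      have hmono := phiAux_mono (b := b) hp.le hqle
      have hqpos : 0 < p/(n:ℝ) + 1/(n:ℝ)^2 := by positivity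
      have hr0 : 0 < 1 - p/(n:ℝ) - 1/(n:ℝ)^2 := by linarith
      have hr1 : 1 - p/(n:ℝ) - 1/(n:ℝ)^2 < 1 := by linarith
      -- the crossing exists below n-1
      have hAr : (psiS b p n - (1+b*p)/n) * (1 - p/(n:ℝ) - 1/(n:ℝ)^2)^(n-1)
          < psiS b p n - b := by
        have h := mul_lt_mul_of_pos_left hcr hA
        have he : (psiS b p n - (1+b*p)/n) * ((psiS b p n - b)/(psiS b p n - (1+b*p)/n))
            = psiS b p n - b := by
          rw [mul_comm]
          exact div_mul_cancel₀ _ (ne_of_gt hA)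
        rw [he] at h
        exact h
      have hcross : b < phiAux b p n (n-1) := by
        by_contra hle
        push_neg at hle
        have hf := phiAux_formula' hb0 hp hn0 hbn hqle (n-1) hle
        rw [hf] at hle
        linarith
      have hmem : sInf {m | b < phiAux b p n m} ∈ {m | b < phiAux b p n m} :=
        Nat.sInf_mem ⟨n-1, hcross⟩
      have hmle : sInf {m | b < phiAux b p n m} ≤ n - 1 := Nat.sInf_le hcross
      have hmpos : 1 ≤ sInf {m | b < phiAux b p n m} := by
        rcases Nat.eq_zero_or_pos (sInf {m | b < phiAux b p n m}) with h | h
        · exfalso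
          have hh : b < phiAux b p n 0 := by rw [← h]; exact hmem
          rw [phiAux_zero_def] at hh; linarith
        · exact h
      obtain ⟨m', hm'⟩ : ∃ m', sInf {m | b < phiAux b p n m} = m' + 1 :=
        ⟨sInf {m | b < phiAux b p n m} - 1, by omega⟩
      have hprev : phiAux b p n m' ≤ b := by
        have h := Nat.notMem_of_lt_sInf (s := {m | b < phiAux b p n m}) (by rw [hm']; exact Nat.lt_succ_self m')
        exact not_lt.mp h
      have hcur : b < phiAux b p n (m'+1) := by rw [← hm']; exact hmem
      have hf1 := phiAux_formula' hb0 hp hn0 hbn hqle m' hprev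
      have hf2 := phiAux_formula hb0 hp hn0 hbn hqle m' hprev
      have hineq1 : (psiS b p n - (1+b*p)/n) * (1 - p/(n:ℝ) - 1/(n:ℝ)^2)^(m'+1)
          < psiS b p n - b := by rw [hf2] at hcur; linarith
      have hineq2 : psiS b p n - b ≤ (psiS b p n - (1+b*p)/n) * (1 - p/(n:ℝ) - 1/(n:ℝ)^2)^m' := by
        rw [hf1] at hprev; linarith
      have hsneg : Real.log (1 - p/(n:ℝ) - 1/(n:ℝ)^2) < 0 := Real.log_neg hr0 hr1
      have hlog1 : ((m':ℝ)+1) * Real.log (1 - p/(n:ℝ) - 1/(n:ℝ)^2)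
          < Real.log (psiS b p n - b) - Real.log (psiS b p n - (1+b*p)/n) := by
        have h := Real.log_lt_log (by positivity) hineq1
        rw [Real.log_mul (ne_of_gt hA) (by positivity), Real.log_pow] at h
        push_cast at h
        linarith
      have hlog2 : Real.log (psiS b p n - b) - Real.log (psiS b p n - (1+b*p)/n)
          ≤ (m':ℝ) * Real.log (1 - p/(n:ℝ) - 1/(n:ℝ)^2) := by
        have h := Real.log_le_log hpsib hineq2
        rw [Real.log_mul (ne_of_gt hA) (by positivity), Real.log_pow] at h
        linarith
      -- kn characterization
      have hm'le : m' + 1 ≤ n - 1 := hm' ▸ hmle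
      have hmemS : (n - (m'+1) + 1) ∈ {k : ℕ | 1 ≤ k ∧ k ≤ n ∧ phi b p n k ≤ b} := by
        refine ⟨by omega, by omega, ?_⟩
        show phiAux b p n (n - (n - (m'+1) + 1)) ≤ b
        rw [show n - (n - (m'+1) + 1) = m' by omega]
        exact hprev
      have hknval : kn b p n = n - (m'+1) + 1 := by
        refine le_antisymm (Nat.sInf_le hmemS) ?_
        refine le_csInf ⟨_, hmemS⟩ ?_
        rintro k ⟨hk1, hkn, hkb⟩
        by_contra hlt
        push_neg at hlt
        have hge : m' + 1 ≤ n - k := by omega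
        have hgt : b < phiAux b p n (n - k) := lt_of_lt_of_le hcur (hmono hge)
        have hkb' : phiAux b p n (n - k) ≤ b := hkb
        linarith
      have hknR : (kn b p n : ℝ) = (n:ℝ) - m' := by
        rw [hknval, show n - (m'+1) + 1 = n - m' from by omega, Nat.cast_sub (by omega)]
      -- real bounds
      set N := Real.log (psiS b p n - b) - Real.log (psiS b p n - (1+b*p)/n) with hN
      set s := Real.log (1 - p/(n:ℝ) - 1/(n:ℝ)^2) with hs
      have hl : N / s < (m':ℝ) + 1 := (div_lt_iff_of_neg hsneg).mpr hlog1
      have hu : (m':ℝ) ≤ N / s := (le_div_iff_of_neg hsneg).mpr hlog2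
      have hDn : N / ((n:ℝ) * s) = (N / s)/(n:ℝ) := by
        rw [mul_comm, ← div_div]
      have e1 : ((n:ℝ) - m')/n = 1 - (m':ℝ)/n := by field_simp
      constructor
      · rw [hknR, e1, hDn]
        have h3 : (m':ℝ)/n ≤ (N/s)/n := by gcongr
        linarith
      · rw [hknR, e1, hDn]
        have h3 : (N/s)/n ≤ ((m':ℝ)+1)/n := by gcongr
        rw [add_div] at h3
        linarith
    refine tendsto_of_tendsto_of_tendsto_of_le_of_le' hG hG1 ?_ ?_
    · filter_upwards [hbnd] with n h using h.1
    · filter_upwards [hbnd] with n h using h.2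
  · rw [heq]
    have h3 : Real.log (1+p*b)/p < 1 := by rw [div_lt_one hp]; exact hlog
    linarith
  · rw [heq]
    have h3 : 0 < Real.log (1+p*b)/p := by positivity
    linarith
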